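/- arXiv:2403.01639 — 2 statements merged into one kernel-verified Lean document; each statement's English description precedes it below -/
import Mathlib

section
/- Let X be an ℝ^d-valued random variable with density f_X and finite differential entropy H(X). Suppose G: ℝ^d → ℝ^d is a C^1 map such that for every x ∈ ℝ^d the Jacobian determinant satisfies 0 < c₁ ≤ det(∇G(x)) ≤ M, every point has finitely many preimages under G, and G(X) has density f_{G(X)}(y) = Σ_{x ∈ G^{-1}(y)} f_X(x)/det(∇G(x)). Then the differential entropy of G(X) satisfies H(G(X)) ≤ H(X) + log M. -/
open MeasureTheory
open scoped ENNReal NNReal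

/-- Auxiliary: a fiberwise sum of a nonnegative measurable function over the (finite) fibers of a
`C¹` local diffeomorphism is measurable. -/
lemma measurable_fiber_sum {d : ℕ}
    (G : (Fin d → ℝ) → (Fin d → ℝ)) (hG : ContDiff ℝ 1 G)
    (c₁ : ℝ) (hc₁ : 0 < c₁)
    (hJ : ∀ x, c₁ ≤ LinearMap.det ((fderiv ℝ G x : (Fin d → ℝ) →ₗ[ℝ] (Fin d → ℝ))))
    (hfin : ∀ y, (G ⁻¹' {y}).Finite)
    (F : (Fin d → ℝ) → ℝ) (hF_meas : Measurable F) (hF_nonneg : ∀ x, 0 ≤ F x) :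
    Measurable (fun y => ∑ᶠ x ∈ G ⁻¹' {y}, F x) := by
  classical
  have hdet : ∀ x, LinearMap.det ((fderiv ℝ G x : (Fin d → ℝ) →ₗ[ℝ] (Fin d → ℝ))) ≠ 0 :=
    fun x => ne_of_gt (lt_of_lt_of_le hc₁ (hJ x))
  -- package the derivative as a continuous linear equiv
  let eqv : (Fin d → ℝ) → ((Fin d → ℝ) ≃L[ℝ] (Fin d → ℝ)) := fun x =>
    LinearEquiv.toContinuousLinearEquiv (LinearMap.equivOfDetNeZero _ (hdet x))
  have hstrict : ∀ x, HasStrictFDerivAt G ((eqv x : (Fin d → ℝ) →L[ℝ] (Fin d → ℝ))) x := by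
    intro x
    have h1 : HasStrictFDerivAt G (fderiv ℝ G x) x :=
      (hG.contDiffAt).hasStrictFDerivAt one_ne_zero
    have h2 : (eqv x : (Fin d → ℝ) →L[ℝ] (Fin d → ℝ)) = fderiv ℝ G x := by
      ext v
      rfl
    rw [h2]
    exact h1
  -- local homeomorphisms around each point
  let pe : (Fin d → ℝ) → OpenPartialHomeomorph (Fin d → ℝ) (Fin d → ℝ) := fun a =>
    (hstrict a).toOpenPartialHomeomorph G
  have pe_coe : ∀ a, ⇑(pe a) = G := fun a => (hstrict a).toOpenPartialHomeomorph_coe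
  have pe_mem : ∀ a, a ∈ (pe a).source := fun a => (hstrict a).mem_toOpenPartialHomeomorph_source
  -- countable subcover of the sources
  obtain ⟨T, hTc, hTU⟩ := TopologicalSpace.isOpen_iUnion_countable
    (fun a => (pe a).source) (fun a => (pe a).open_source)
  have hTne : T.Nonempty := by
    by_contra h
    rw [Set.not_nonempty_iff_eq_empty] at h
    have : (0 : Fin d → ℝ) ∈ ⋃ a ∈ T, (pe a).source := by
      rw [hTU]
      exact Set.mem_iUnion.2 ⟨0, pe_mem 0⟩
    simp [h] at this
  obtain ⟨u, hu⟩ := hTc.exists_eq_range hTne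
  set e : ℕ → OpenPartialHomeomorph (Fin d → ℝ) (Fin d → ℝ) := fun n => pe (u n) with he
  have hcov : ∀ x, ∃ n, x ∈ (e n).source := by
    intro x
    have : x ∈ ⋃ a ∈ T, (pe a).source := by
      rw [hTU]; exact Set.mem_iUnion.2 ⟨x, pe_mem x⟩
    rw [hu] at this
    obtain ⟨a, ⟨⟨n, rfl⟩, hx⟩⟩ := Set.mem_iUnion₂.1 this
    exact ⟨n, hx⟩
  -- index of first chart containing x
  let N : (Fin d → ℝ) → ℕ := fun x => Nat.find (hcov x)
  have hN_mem : ∀ x, x ∈ (e (N x)).source := fun x => Nat.find_spec (hcov x)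
  -- the "disjointified" pieces
  let D : ℕ → Set (Fin d → ℝ) := fun n => {x | N x = n}
  have hD_eq : ∀ n, D n = (e n).source ∩ ⋂ m ∈ Finset.range n, ((e m).source)ᶜ := by
    intro n
    ext x
    simp only [D, Set.mem_setOf_eq, Set.mem_inter_iff, Set.mem_iInter, Set.mem_compl_iff,
      Finset.mem_range, N, Nat.find_eq_iff]
  have hD_meas : ∀ n, MeasurableSet (D n) := by
    intro n
    rw [hD_eq]
    exact ((e n).open_source.measurableSet).inter
      (MeasurableSet.biInter (Set.to_countable _)
        (fun m _ => ((e m).open_source.measurableSet).compl))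
  -- measurable retraction
  let r : ℕ → (Fin d → ℝ) → (Fin d → ℝ) := fun n y =>
    if hy : y ∈ (e n).target then (e n).symm y else 0
  have hr_meas : ∀ n, Measurable (r n) := by
    intro n
    have h1 : Measurable (fun y : ((e n).target : Set (Fin d → ℝ)) => (e n).symm y) :=
      ((e n).continuousOn_symm.restrict).measurable
    have h2 : Measurable (fun _ : ((((e n).target : Set (Fin d → ℝ)))ᶜ : Set (Fin d → ℝ)) =>
      (0 : Fin d → ℝ)) := measurable_const
    exact Measurable.dite h1 h2 (e n).open_target.measurableSet
  -- summands
  let A : ℕ → Set (Fin d → ℝ) := fun n => (e n).target ∩ (r n) ⁻¹' (D n)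
  have hA_meas : ∀ n, MeasurableSet (A n) :=
    fun n => ((e n).open_target.measurableSet).inter ((hr_meas n) (hD_meas n))
  let S : ℕ → (Fin d → ℝ) → ℝ := fun n => (A n).indicator (fun y => F (r n y))
  have hS_meas : ∀ n, Measurable (S n) :=
    fun n => (hF_meas.comp (hr_meas n)).indicator (hA_meas n)
  have hS_nonneg : ∀ n y, 0 ≤ S n y := by
    intro n y
    by_cases hy : y ∈ A n
    · simp only [S, Set.indicator_of_mem hy]; exact hF_nonneg _
    · simp [S, Set.indicator_of_notMem hy]
  -- key pointwise identity
  have hpoint : ∀ y, (∑ᶠ x ∈ G ⁻¹' {y}, F x)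
      = (∑' n, ENNReal.ofReal (S n y)).toReal := by
    intro y
    set s : Finset (Fin d → ℝ) := (hfin y).toFinset with hs
    have hmem_s : ∀ x, x ∈ s ↔ G x = y := by
      intro x; simp [hs, Set.Finite.mem_toFinset]
    -- if the summand is nonzero, it comes from a fiber point
    have hK1 : ∀ n, S n y ≠ 0 → r n y ∈ s ∧ N (r n y) = n ∧ S n y = F (r n y) := by
      intro n hn
      have hyA : y ∈ A n := by
        by_contra h
        simp [S, Set.indicator_of_notMem h] at hn
      obtain ⟨hyt, hyD⟩ := hyA
      have hxval : r n y = (e n).symm y := dif_pos hyt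
      have hGx : G (r n y) = y := by
        have := (e n).right_inv hyt
        rw [← pe_coe (u n)]
        rw [hxval]
        exact this
      refine ⟨(hmem_s _).2 hGx, hyD, ?_⟩
      have hyA : y ∈ A n := ⟨hyt, hyD⟩
      show (A n).indicator (fun z => F (r n z)) y = F (r n y)
      exact Set.indicator_of_mem hyA _
    have hK2 : ∀ x ∈ s, S (N x) y = F x := by
      intro x hx
      have hGx : G x = y := (hmem_s x).1 hx
      have hsrc : x ∈ (e (N x)).source := hN_mem x
      have hyt : y ∈ (e (N x)).target := by
        rw [← hGx, ← pe_coe (u (N x))]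
        exact (e (N x)).map_source hsrc
      have hrx : r (N x) y = x := by
        have h1 : r (N x) y = (e (N x)).symm y := dif_pos hyt
        rw [h1, ← hGx, ← pe_coe (u (N x))]
        exact (e (N x)).left_inv hsrc
      have hyA : y ∈ A (N x) := ⟨hyt, by rw [Set.mem_preimage, hrx]; rfl⟩
      have hSval : S (N x) y = F (r (N x) y) := by
        show (A (N x)).indicator (fun z => F (r (N x) z)) y = F (r (N x) y)
        exact Set.indicator_of_mem hyA _
      rw [hSval, hrx]
    have hK3 : ∀ x₁ ∈ s, ∀ x₂ ∈ s, N x₁ = N x₂ → x₁ = x₂ := by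
      intro x₁ h₁ x₂ h₂ hN
      have hG₁ : G x₁ = y := (hmem_s x₁).1 h₁
      have hG₂ : G x₂ = y := (hmem_s x₂).1 h₂
      have hsrc₁ : x₁ ∈ (e (N x₂)).source := hN ▸ hN_mem x₁
      have hsrc₂ : x₂ ∈ (e (N x₂)).source := hN_mem x₂
      have : (e (N x₂)) x₁ = (e (N x₂)) x₂ := by
        rw [pe_coe (u (N x₂)), hG₁, hG₂]
      exact (e (N x₂)).injOn hsrc₁ hsrc₂ this
    set t : Finset ℕ := s.image N with ht
    have htsum : ∑' n, ENNReal.ofReal (S n y) = ∑ n ∈ t, ENNReal.ofReal (S n y) := by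
      apply tsum_eq_sum
      intro n hn
      by_cases h0 : S n y = 0
      · simp [h0]
      · obtain ⟨hxs, hNx, _⟩ := hK1 n h0
        exact absurd (Finset.mem_image.2 ⟨_, hxs, hNx⟩) hn
    have hsum_t : ∑ n ∈ t, ENNReal.ofReal (S n y) = ∑ x ∈ s, ENNReal.ofReal (F x) := by
      rw [ht, Finset.sum_image (by intro x₁ h₁ x₂ h₂ h; exact hK3 x₁ h₁ x₂ h₂ h)]
      exact Finset.sum_congr rfl (fun x hx => by rw [hK2 x hx])
    rw [htsum, hsum_t, finsum_mem_eq_finite_toFinset_sum _ (hfin y), ← hs]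
    rw [← ENNReal.ofReal_sum_of_nonneg (fun x _ => hF_nonneg x)]
    rw [ENNReal.toReal_ofReal (Finset.sum_nonneg (fun x _ => hF_nonneg x))]
  have : (fun y => ∑ᶠ x ∈ G ⁻¹' {y}, F x)
      = fun y => (∑' n, ENNReal.ofReal (S n y)).toReal := funext hpoint
  rw [this]
  exact (Measurable.ennreal_tsum
    (fun n => ENNReal.measurable_ofReal.comp (hS_meas n))).ennreal_toReal

/-- Auxiliary: entropy integral transfer through a law given by a density. -/
lemma integral_log_density_aux {d : ℕ} {Ω : Type*} [MeasurableSpace Ω]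
    (μ : Measure Ω) (Y : Ω → (Fin d → ℝ)) (hY : Measurable Y)
    (p : (Fin d → ℝ) → ℝ) (hp_nonneg : ∀ x, 0 ≤ p x) (hp_meas : Measurable p)
    (h_law : Measure.map Y μ = volume.withDensity (fun x => ENNReal.ofReal (p x))) :
    (∫ ω, Real.log (p (Y ω)) ∂μ = ∫ x, p x * Real.log (p x)) ∧
    (Integrable (fun x => p x * Real.log (p x)) → Integrable (fun ω => Real.log (p (Y ω))) μ) := by
  have hlog_meas : Measurable (fun y => Real.log (p y)) := Real.measurable_log.comp hp_meas
  have hcoe : (fun x => ENNReal.ofReal (p x))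
      = (fun x => ((Real.toNNReal (p x) : ℝ≥0) : ℝ≥0∞)) := rfl
  have hmap : ∫ ω, Real.log (p (Y ω)) ∂μ = ∫ y, Real.log (p y) ∂(Measure.map Y μ) :=
    (integral_map hY.aemeasurable hlog_meas.aestronglyMeasurable).symm
  constructor
  · rw [hmap, h_law, hcoe,
      integral_withDensity_eq_integral_smul (hp_meas.real_toNNReal) (fun y => Real.log (p y))]
    congr 1
    funext y
    rw [NNReal.smul_def, Real.coe_toNNReal _ (hp_nonneg y), smul_eq_mul]
  · intro h_ent
    have h1 : Integrable (fun y => Real.log (p y)) (Measure.map Y μ) := by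
      rw [h_law]
      rw [integrable_withDensity_iff hp_meas.ennreal_ofReal
        (Filter.Eventually.of_forall fun x => ENNReal.ofReal_lt_top)]
      have : (fun y => Real.log (p y) * (ENNReal.ofReal (p y)).toReal)
          = fun y => p y * Real.log (p y) := by
        funext y
        rw [ENNReal.toReal_ofReal (hp_nonneg y), mul_comm]
      rw [this]
      exact h_ent
    exact (integrable_map_measure hlog_meas.aestronglyMeasurable hY.aemeasurable).1 h1

/-- Entropy change under a smooth (possibly non-injective) map with Jacobian determinant
bounded in `[c₁, M]` with `c₁ > 0`: if `G(X)` has the change-of-variables density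
`g(y) = Σ_{x ∈ G⁻¹(y)} f(x) / det(∇G(x))`, then `H(G(X)) ≤ H(X) + log M`. -/
theorem entropy_nonlinear_map_upper_bound
    {d : ℕ} {Ω : Type*} [MeasurableSpace Ω]
    (μ : Measure Ω) [IsProbabilityMeasure μ]
    (X : Ω → (Fin d → ℝ)) (hX : Measurable X)
    (f : (Fin d → ℝ) → ℝ) (hf_nonneg : ∀ x, 0 ≤ f x) (hf_meas : Measurable f)
    (hf_law : Measure.map X μ = volume.withDensity (fun x => ENNReal.ofReal (f x)))
    (hf_ent : Integrable (fun x => f x * Real.log (f x)))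
    (G : (Fin d → ℝ) → (Fin d → ℝ)) (hG : ContDiff ℝ 1 G)
    (c₁ M : ℝ) (hc₁ : 0 < c₁)
    (hJac : ∀ x, c₁ ≤ LinearMap.det ((fderiv ℝ G x : (Fin d → ℝ) →ₗ[ℝ] (Fin d → ℝ))) ∧
      LinearMap.det ((fderiv ℝ G x : (Fin d → ℝ) →ₗ[ℝ] (Fin d → ℝ))) ≤ M)
    (hfin : ∀ y, (G ⁻¹' {y}).Finite)
    (g : (Fin d → ℝ) → ℝ)
    (hg : ∀ y, g y = ∑ᶠ x ∈ G ⁻¹' {y},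
      f x / LinearMap.det ((fderiv ℝ G x : (Fin d → ℝ) →ₗ[ℝ] (Fin d → ℝ))))
    (hg_law : Measure.map (fun ω => G (X ω)) μ
      = volume.withDensity (fun y => ENNReal.ofReal (g y)))
    (hg_ent : Integrable (fun y => g y * Real.log (g y))) :
    (-∫ y, g y * Real.log (g y)) ≤ (-∫ x, f x * Real.log (f x)) + Real.log M := by
  classical
  set J : (Fin d → ℝ) → ℝ := fun x =>
    LinearMap.det ((fderiv ℝ G x : (Fin d → ℝ) →ₗ[ℝ] (Fin d → ℝ))) with hJdef
  have hJpos : ∀ x, 0 < J x := fun x => lt_of_lt_of_le hc₁ (hJac x).1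
  have hMpos : 0 < M := lt_of_lt_of_le (hJpos 0) (hJac 0).2
  have hJ_cont : Continuous J := by
    have h1 : Continuous (fderiv ℝ G) := hG.continuous_fderiv one_ne_zero
    exact ContinuousLinearMap.continuous_det.comp h1
  -- nonnegativity of the summands
  have hFnn : ∀ x, 0 ≤ f x / J x := fun x => div_nonneg (hf_nonneg x) (le_of_lt (hJpos x))
  -- g is measurable
  have hg_meas : Measurable g := by
    have hgeq : g = fun y => ∑ᶠ x ∈ G ⁻¹' {y}, f x / J x := funext hg
    rw [hgeq]
    exact measurable_fiber_sum G hG c₁ hc₁ (fun x => (hJac x).1) hfin _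
      (hf_meas.div hJ_cont.measurable) hFnn
  -- g is nonnegative
  have hg_nonneg : ∀ y, 0 ≤ g y := by
    intro y
    rw [hg y, finsum_mem_eq_finite_toFinset_sum _ (hfin y)]
    exact Finset.sum_nonneg fun x _ => hFnn x
  -- key pointwise bound
  have hkey : ∀ x, f x / M ≤ g (G x) := by
    intro x
    rw [hg (G x), finsum_mem_eq_finite_toFinset_sum _ (hfin (G x))]
    have hx : x ∈ (hfin (G x)).toFinset := by simp [Set.Finite.mem_toFinset]
    calc f x / M ≤ f x / J x := by
          gcongr
          exacts [hf_nonneg x, hJpos x, (hJac x).2]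
      _ ≤ ∑ z ∈ (hfin (G x)).toFinset, f z / J z :=
          Finset.single_le_sum (fun z _ => hFnn z) hx
  -- a.e. positivity of f under the law of X
  have hf_pos_ae : ∀ᵐ x ∂(Measure.map X μ), 0 < f x := by
    rw [hf_law, ae_iff]
    have hset : {x : Fin d → ℝ | ¬ 0 < f x} = f ⁻¹' (Set.Iic 0) := by
      ext x; simp [not_lt]
    have hsm : MeasurableSet {x : Fin d → ℝ | ¬ 0 < f x} := by
      rw [hset]; exact hf_meas measurableSet_Iic
    rw [withDensity_apply _ hsm]
    have hz : ∀ᵐ x ∂(volume.restrict {x : Fin d → ℝ | ¬ 0 < f x}),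
        ENNReal.ofReal (f x) = 0 := by
      refine (ae_restrict_iff' hsm).2 (Filter.Eventually.of_forall fun x hx => ?_)
      simp only [Set.mem_setOf_eq, not_lt] at hx
      exact ENNReal.ofReal_eq_zero.2 hx
    rw [lintegral_congr_ae hz, lintegral_zero]
  have hf_posω : ∀ᵐ ω ∂μ, 0 < f (X ω) := by
    have hsm : MeasurableSet {x : Fin d → ℝ | 0 < f x} :=
      measurableSet_lt measurable_const hf_meas
    exact (ae_map_iff hX.aemeasurable hsm).1 hf_pos_ae
  -- pointwise a.e. log inequality
  have h_ae : ∀ᵐ ω ∂μ, Real.log (f (X ω)) ≤ Real.log (g (G (X ω))) + Real.log M := by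
    filter_upwards [hf_posω] with ω hpos
    have h1 : f (X ω) / M ≤ g (G (X ω)) := hkey (X ω)
    have hgpos : 0 < g (G (X ω)) := lt_of_lt_of_le (div_pos hpos hMpos) h1
    have h2 : f (X ω) ≤ g (G (X ω)) * M := (div_le_iff₀ hMpos).1 h1
    calc Real.log (f (X ω)) ≤ Real.log (g (G (X ω)) * M) := Real.log_le_log hpos h2
      _ = Real.log (g (G (X ω))) + Real.log M :=
          Real.log_mul (ne_of_gt hgpos) (ne_of_gt hMpos)
  -- integral transfers
  have hf_side := integral_log_density_aux μ X hX f hf_nonneg hf_meas hf_law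
  have hg_side := integral_log_density_aux μ (fun ω => G (X ω))
    (hG.continuous.measurable.comp hX) g hg_nonneg hg_meas hg_law
  have hint_f : Integrable (fun ω => Real.log (f (X ω))) μ := hf_side.2 hf_ent
  have hint_g : Integrable (fun ω => Real.log (g (G (X ω)))) μ := hg_side.2 hg_ent
  have hIneq : ∫ ω, Real.log (f (X ω)) ∂μ
      ≤ ∫ ω, (Real.log (g (G (X ω))) + Real.log M) ∂μ :=
    integral_mono_ae hint_f (hint_g.add (integrable_const _)) h_ae
  rw [integral_add hint_g (integrable_const _), integral_const, probReal_univ,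
    one_smul] at hIneq
  rw [hf_side.1, hg_side.1] at hIneq
  linarith
end

section
/- Consider a two-component GMM w₁N(μ₁, I_d) + w₂N(μ₂, I_d) with w₁, w₂ > 0, w₁ + w₂ = 1, and let μ = (μ₁ - μ₂)/2. For the guided DDIM ODE dx_t/dt with guidance strength η ≥ 0 and the unguided ODE for z_t, one has 2 d/dt⟨x_t, μ⟩ = e^{-(T-t)}(‖μ₁‖² - ⟨μ₁, μ₂⟩) + 4η e^{-(T-t)}(1 - q_{T-t}(x_t, 1))‖μ‖² and 2 d/dt⟨z_t, μ⟩ = e^{-(T-t)}(‖μ₁‖² - ⟨μ₁, μ₂⟩). Consequently, if ⟨x₀, μ⟩ ≥ ⟨z₀, μ⟩, then ⟨x_t, μ⟩ ≥ ⟨z_t, μ⟩ for all t ∈ [0,T], and hence the posterior probability of class 1 satisfies 𝒫(x_t, 1) ≥ 𝒫(z_t, 1). -/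
open scoped RealInnerProductSpace

lemma aux_frac_mono (w₁ w₂ : ℝ) (hw₁ : 0 < w₁) (hw₂ : 0 < w₂)
    (a₁ a₂ b₁ b₂ : ℝ) (h : a₁ + b₂ ≤ b₁ + a₂) :
    w₁ * Real.exp a₁ / (w₁ * Real.exp a₁ + w₂ * Real.exp a₂) ≤
      w₁ * Real.exp b₁ / (w₁ * Real.exp b₁ + w₂ * Real.exp b₂) := by
  have p1 : 0 < w₁ * Real.exp a₁ + w₂ * Real.exp a₂ := by positivity
  have p2 : 0 < w₁ * Real.exp b₁ + w₂ * Real.exp b₂ := by positivity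
  rw [div_le_div_iff₀ p1 p2]
  have key : Real.exp a₁ * Real.exp b₂ ≤ Real.exp b₁ * Real.exp a₂ := by
    rw [← Real.exp_add, ← Real.exp_add]; exact Real.exp_le_exp.mpr h
  nlinarith [Real.exp_pos a₁, Real.exp_pos a₂, Real.exp_pos b₁, Real.exp_pos b₂,
    mul_pos hw₁ hw₂]

/-- Two-component GMM `w₁ N(μ₁, I) + w₂ N(μ₂, I)`, `μ = (μ₁ - μ₂)/2`. The guided DDIM
ODE with strength `η ≥ 0` and the unguided ODE satisfy the stated derivative identities
for `2⟨x_t, μ⟩` and `2⟨z_t, μ⟩`; consequently, if `⟨x₀, μ⟩ ≥ ⟨z₀, μ⟩` then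
`⟨x_t, μ⟩ ≥ ⟨z_t, μ⟩` on `[0,T]`, and hence `𝒫(x_t, 1) ≥ 𝒫(z_t, 1)`. -/
theorem two_component_guided_confidence
    {d : ℕ}
    (w₁ w₂ : ℝ) (hw₁ : 0 < w₁) (hw₂ : 0 < w₂) (hw : w₁ + w₂ = 1)
    (μ₁ μ₂ : EuclideanSpace ℝ (Fin d))
    (μm : EuclideanSpace ℝ (Fin d)) (hμm : μm = (1 / 2 : ℝ) • (μ₁ - μ₂))
    (T η : ℝ) (hT : 0 < T) (hη : 0 ≤ η)
    (q : ℝ → EuclideanSpace ℝ (Fin d) → ℝ)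
    (hq : ∀ s p, q s p =
      w₁ * Real.exp (Real.exp (-s) * ⟪μ₁, p⟫ - Real.exp (-(2 * s)) * ‖μ₁‖ ^ 2 / 2) /
        (w₁ * Real.exp (Real.exp (-s) * ⟪μ₁, p⟫ - Real.exp (-(2 * s)) * ‖μ₁‖ ^ 2 / 2)
          + w₂ * Real.exp (Real.exp (-s) * ⟪μ₂, p⟫ - Real.exp (-(2 * s)) * ‖μ₂‖ ^ 2 / 2)))
    (P : EuclideanSpace ℝ (Fin d) → ℝ)
    (hP : ∀ p, P p =
      w₁ * Real.exp (⟪p, μ₁⟫ - ‖μ₁‖ ^ 2 / 2) /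
        (w₁ * Real.exp (⟪p, μ₁⟫ - ‖μ₁‖ ^ 2 / 2) + w₂ * Real.exp (⟪p, μ₂⟫ - ‖μ₂‖ ^ 2 / 2)))
    (x z : ℝ → EuclideanSpace ℝ (Fin d))
    (hx : ∀ t ∈ Set.Icc (0:ℝ) T, HasDerivAt x
      (Real.exp (-(T - t)) • μ₁ + η •
        (Real.exp (-(T - t)) • μ₁
          - Real.exp (-(T - t)) • (q (T - t) (x t) • μ₁ + (1 - q (T - t) (x t)) • μ₂))) t)
    (hz : ∀ t ∈ Set.Icc (0:ℝ) T, HasDerivAt z (Real.exp (-(T - t)) • μ₁) t) :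
    (∀ t ∈ Set.Icc (0:ℝ) T, HasDerivAt (fun s => 2 * ⟪x s, μm⟫)
      (Real.exp (-(T - t)) * (‖μ₁‖ ^ 2 - ⟪μ₁, μ₂⟫)
        + 4 * η * Real.exp (-(T - t)) * (1 - q (T - t) (x t)) * ‖μm‖ ^ 2) t) ∧
    (∀ t ∈ Set.Icc (0:ℝ) T, HasDerivAt (fun s => 2 * ⟪z s, μm⟫)
      (Real.exp (-(T - t)) * (‖μ₁‖ ^ 2 - ⟪μ₁, μ₂⟫)) t) ∧
    (⟪z 0, μm⟫ ≤ ⟪x 0, μm⟫ →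
      ∀ t ∈ Set.Icc (0:ℝ) T, ⟪z t, μm⟫ ≤ ⟪x t, μm⟫ ∧ P (z t) ≤ P (x t)) := by
  -- basic bounds on q
  have hq01 : ∀ s p, 0 ≤ q s p ∧ q s p ≤ 1 := by
    intro s p
    rw [hq s p]
    set A := w₁ * Real.exp (Real.exp (-s) * ⟪μ₁, p⟫ - Real.exp (-(2 * s)) * ‖μ₁‖ ^ 2 / 2)
    set B := w₂ * Real.exp (Real.exp (-s) * ⟪μ₂, p⟫ - Real.exp (-(2 * s)) * ‖μ₂‖ ^ 2 / 2)
    have hA : 0 < A := by positivity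
    have hB : 0 < B := by positivity
    constructor
    · positivity
    · rw [div_le_one (by linarith)]; linarith
  -- the inner-product identity for the guided drift
  have key : ∀ (e u : ℝ),
      2 * (⟪(e • μ₁ + η • (e • μ₁ - e • (u • μ₁ + (1 - u) • μ₂)) :
        EuclideanSpace ℝ (Fin d)), μm⟫)
      = e * (‖μ₁‖ ^ 2 - ⟪μ₁, μ₂⟫) + 4 * η * e * (1 - u) * ‖μm‖ ^ 2 := by
    intro e u
    have h1 : (‖μ₁‖ : ℝ) ^ 2 = ⟪μ₁, μ₁⟫ := (real_inner_self_eq_norm_sq μ₁).symm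
    have h2 : (‖μm‖ : ℝ) ^ 2 = ⟪μm, μm⟫ := (real_inner_self_eq_norm_sq μm).symm
    have h21 : ⟪μ₂, μ₁⟫ = ⟪μ₁, μ₂⟫ := real_inner_comm μ₁ μ₂
    subst hμm
    rw [h1, h2]
    simp only [inner_add_left, inner_sub_left, inner_sub_right, inner_smul_left,
      inner_smul_right, inner_add_right, RCLike.ofReal_real_eq_id, id_eq,
      conj_trivial]
    rw [h21]
    ring
  have part1 : ∀ t ∈ Set.Icc (0:ℝ) T, HasDerivAt (fun s => 2 * ⟪x s, μm⟫)
      (Real.exp (-(T - t)) * (‖μ₁‖ ^ 2 - ⟪μ₁, μ₂⟫)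
        + 4 * η * Real.exp (-(T - t)) * (1 - q (T - t) (x t)) * ‖μm‖ ^ 2) t := by
    intro t ht
    have h := ((hx t ht).inner ℝ (hasDerivAt_const t μm)).const_mul (2:ℝ)
    simp only [inner_zero_right, zero_add] at h
    exact key (Real.exp (-(T - t))) (q (T - t) (x t)) ▸ h
  have part2 : ∀ t ∈ Set.Icc (0:ℝ) T, HasDerivAt (fun s => 2 * ⟪z s, μm⟫)
      (Real.exp (-(T - t)) * (‖μ₁‖ ^ 2 - ⟪μ₁, μ₂⟫)) t := by
    intro t ht
    have h := ((hz t ht).inner ℝ (hasDerivAt_const t μm)).const_mul (2:ℝ)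
    simp only [inner_zero_right, zero_add] at h
    have k := key (Real.exp (-(T - t))) 1
    simp only [sub_self, one_smul, zero_smul, add_zero, smul_zero, mul_zero,
      zero_mul] at k
    exact k ▸ h
  refine ⟨part1, part2, ?_⟩
  intro h0 t ht
  -- monotonicity of the gap
  set g : ℝ → ℝ := fun s => 2 * ⟪x s, μm⟫ - 2 * ⟪z s, μm⟫ with hg
  have hg' : ∀ s ∈ Set.Icc (0:ℝ) T, HasDerivAt g
      (4 * η * Real.exp (-(T - s)) * (1 - q (T - s) (x s)) * ‖μm‖ ^ 2) s := by
    intro s hs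
    have := (part1 s hs).sub (part2 s hs)
    exact this.congr_deriv (by ring)
  have hgpos : ∀ s ∈ Set.Icc (0:ℝ) T,
      0 ≤ 4 * η * Real.exp (-(T - s)) * (1 - q (T - s) (x s)) * ‖μm‖ ^ 2 := by
    intro s hs
    have := (hq01 (T - s) (x s)).2
    have h1 : (0:ℝ) ≤ 1 - q (T - s) (x s) := by linarith
    positivity
  have hmono : MonotoneOn g (Set.Icc 0 T) := by
    apply monotoneOn_of_deriv_nonneg (convex_Icc 0 T)
    · intro s hs; exact (hg' s hs).continuousAt.continuousWithinAt
    · intro s hs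
      rw [interior_Icc] at hs
      exact ((hg' s (Set.mem_Icc_of_Ioo hs)).differentiableAt.differentiableWithinAt)
    · intro s hs
      rw [interior_Icc] at hs
      rw [(hg' s (Set.mem_Icc_of_Ioo hs)).deriv]
      exact hgpos s (Set.mem_Icc_of_Ioo hs)
  have h0mem : (0:ℝ) ∈ Set.Icc (0:ℝ) T := ⟨le_refl 0, hT.le⟩
  have hgt : g 0 ≤ g t := hmono h0mem ht ht.1
  have hg0 : 0 ≤ g 0 := by simp only [hg]; linarith
  have hle : ⟪z t, μm⟫ ≤ ⟪x t, μm⟫ := by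
    have : 0 ≤ g t := le_trans hg0 hgt
    simp only [hg] at this; linarith
  refine ⟨hle, ?_⟩
  rw [hP (z t), hP (x t)]
  apply aux_frac_mono w₁ w₂ hw₁ hw₂
  have hzin : ⟪z t, μ₁⟫ + ⟪x t, μ₂⟫ ≤ ⟪x t, μ₁⟫ + ⟪z t, μ₂⟫ := by
    have hx' : ⟪x t, μm⟫ = (1/2:ℝ) * (⟪x t, μ₁⟫ - ⟪x t, μ₂⟫) := by
      rw [hμm]; simp [inner_smul_right, inner_sub_right]
    have hz' : ⟪z t, μm⟫ = (1/2:ℝ) * (⟪z t, μ₁⟫ - ⟪z t, μ₂⟫) := by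
      rw [hμm]; simp [inner_smul_right, inner_sub_right]
    rw [hx', hz'] at hle; linarith
  linarith
end
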